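/- Let G be a graph and M a matching in G. If G is well-edge-dominated, then G - N_e[M] (the subgraph on edges not in or adjacent to M) is well-edge-dominated. -/

import Mathlib

/-- `F` is an edge dominating set of `G`: every edge of `G` is in `F` or shares a
vertex with an edge of `F` (edges of `F` themselves share a vertex with themselves). -/
def IsEDS {V : Type*} (G : SimpleGraph V) (F : Finset (Sym2 V)) : Prop :=
  ↑F ⊆ G.edgeSet ∧ ∀ e ∈ G.edgeSet, ∃ f ∈ F, ∃ v : V, v ∈ e ∧ v ∈ f

/-- `F` is a minimal edge dominating set of `G`. -/
def IsMinEDS {V : Type*} (G : SimpleGraph V) (F : Finset (Sym2 V)) : Prop :=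
  IsEDS G F ∧ ∀ F' ⊂ F, ¬ IsEDS G F'

/-- `G` is well-edge-dominated: all minimal edge dominating sets have the same size. -/
def WellEdgeDominated {V : Type*} (G : SimpleGraph V) : Prop :=
  ∀ F₁ F₂ : Finset (Sym2 V), IsMinEDS G F₁ → IsMinEDS G F₂ → F₁.card = F₂.card

/-- `M` is a matching of `G`: a set of pairwise vertex-disjoint edges. -/
def IsMatchingSet {V : Type*} (G : SimpleGraph V) (M : Finset (Sym2 V)) : Prop :=
  ↑M ⊆ G.edgeSet ∧ ∀ e ∈ M, ∀ f ∈ M, e ≠ f → ∀ v : V, ¬ (v ∈ e ∧ v ∈ f)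

/-- `M` is a maximal matching of `G`: a matching such that every edge of `G`
shares a vertex with an edge of `M` (so no edge can be added). -/
def IsMaximalMatching {V : Type*} (G : SimpleGraph V) (M : Finset (Sym2 V)) : Prop :=
  IsMatchingSet G M ∧ ∀ e ∈ G.edgeSet, ∃ f ∈ M, ∃ v : V, v ∈ e ∧ v ∈ f

/-- `G` is equimatchable: all maximal matchings have the same size. -/
def Equimatchable {V : Type*} (G : SimpleGraph V) : Prop :=
  ∀ M₁ M₂ : Finset (Sym2 V), IsMaximalMatching G M₁ → IsMaximalMatching G M₂ →
    M₁.card = M₂.card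


/-- The graph `G - N_e[M]`: delete all edges in or adjacent to an edge of `M`,
i.e. the subgraph on the vertices not saturated by `M`. -/
def deleteClosedEdgeNbhd {V : Type*} (G : SimpleGraph V) (M : Finset (Sym2 V)) :
    SimpleGraph V where
  Adj a b := G.Adj a b ∧ ∀ f ∈ M, a ∉ f ∧ b ∉ f
  symm := by
    constructor
    intro a b h
    exact ⟨h.1.symm, fun f hf => ⟨(h.2 f hf).2, (h.2 f hf).1⟩⟩
  loopless := ⟨fun a h => G.loopless.irrefl a h.1⟩

/-- If `G` is well-edge-dominated and `M` is a matching in `G`, then `G - N_e[M]`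
is well-edge-dominated. -/
theorem wed_deleteClosedEdgeNbhd {V : Type*} (G : SimpleGraph V)
    (M : Finset (Sym2 V)) (hM : IsMatchingSet G M) (hG : WellEdgeDominated G) :
    WellEdgeDominated (deleteClosedEdgeNbhd G M) := by
  classical
  intro F₁ F₂ h₁ h₂
  set G' := deleteClosedEdgeNbhd G M with hG'
  have hle : ∀ e ∈ G'.edgeSet, e ∈ G.edgeSet := by
    intro e he
    induction e with
    | h a b => exact (show (deleteClosedEdgeNbhd G M).Adj _ _ from he).1
  have havoid' : ∀ e ∈ G'.edgeSet, ∀ v ∈ e, ∀ f ∈ M, v ∉ f := by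
    intro e he v hv f hf
    induction e with
    | h a b =>
      rcases Sym2.mem_iff.mp hv with rfl | rfl
      · exact ((show (deleteClosedEdgeNbhd G M).Adj _ _ from he).2 f hf).1
      · exact ((show (deleteClosedEdgeNbhd G M).Adj _ _ from he).2 f hf).2
  have mono : ∀ (A B : Finset (Sym2 V)), A ⊆ B → ↑B ⊆ G.edgeSet → IsEDS G A →
      IsEDS G B := by
    rintro A B hAB hB ⟨_, hdom⟩
    refine ⟨hB, fun e he => ?_⟩
    obtain ⟨f, hf, hv⟩ := hdom e he
    exact ⟨f, hAB hf, hv⟩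
  have key : ∀ F : Finset (Sym2 V), IsMinEDS G' F →
      Disjoint F M ∧ IsMinEDS G (F ∪ M) := by
    intro F hF
    obtain ⟨⟨hFsub, hFdom⟩, hFmin⟩ := hF
    have havoid : ∀ e ∈ F, ∀ v ∈ e, ∀ f ∈ M, v ∉ f := by
      intro e he v hv f hf
      exact havoid' e (hFsub he) v hv f hf
    have hdisj : Disjoint F M := by
      rw [Finset.disjoint_left]
      intro e heF heM
      induction e with
      | h a b =>
        exact havoid _ heF a (Sym2.mem_mk_left a b) _ heM (Sym2.mem_mk_left a b)
    have hsub : ↑(F ∪ M) ⊆ G.edgeSet := by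
      intro e he
      rw [Finset.coe_union, Set.mem_union] at he
      rcases he with h | h
      · exact hle e (hFsub h)
      · exact hM.1 h
    refine ⟨hdisj, ⟨hsub, ?_⟩, ?_⟩
    · -- domination
      intro e he
      by_cases h : ∃ f ∈ M, ∃ v : V, v ∈ e ∧ v ∈ f
      · obtain ⟨f, hf, v, hv⟩ := h
        exact ⟨f, Finset.mem_union_right _ hf, v, hv⟩
      · push_neg at h
        have he' : e ∈ G'.edgeSet := by
          induction e with
          | h a b =>
            exact show (deleteClosedEdgeNbhd G M).Adj a b from ⟨he, fun f hf =>
              ⟨h f hf a (Sym2.mem_mk_left a b),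
               h f hf b (Sym2.mem_mk_right a b)⟩⟩
        obtain ⟨f, hf, v, hv⟩ := hFdom e he'
        exact ⟨f, Finset.mem_union_left _ hf, v, hv⟩
    · -- minimality
      intro F' hF' hF'eds
      obtain ⟨hsubs, hne⟩ := hF'
      obtain ⟨e, heFM, heF'⟩ := Finset.exists_of_ssubset ⟨hsubs, hne⟩
      have herase : IsEDS G ((F ∪ M).erase e) := by
        refine mono F' _ ?_ ?_ hF'eds
        · intro x hx
          exact Finset.mem_erase.mpr ⟨fun hxe => heF' (by rwa [hxe] at hx), hsubs hx⟩
        · exact fun x hx => hsub (Finset.erase_subset _ _ hx)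
      rcases Finset.mem_union.mp heFM with heF | heM
      · -- e ∈ F : then F.erase e is an EDS of G', contradicting minimality
        apply hFmin (F.erase e) (Finset.erase_ssubset heF)
        refine ⟨fun x hx => hFsub (Finset.erase_subset _ _ hx), ?_⟩
        intro g hg
        obtain ⟨f, hf, v, hv1, hv2⟩ := herase.2 g (hle g hg)
        have hfF : f ∈ F := by
          rcases Finset.mem_union.mp (Finset.mem_of_mem_erase hf) with h | h
          · exact h
          · exact absurd hv2 (havoid' g hg v hv1 f h)
        exact ⟨f, Finset.mem_erase.mpr ⟨(Finset.mem_erase.mp hf).1, hfF⟩, v, hv1, hv2⟩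
      · -- e ∈ M : the edge e itself is undominated
        obtain ⟨f, hf, v, hv1, hv2⟩ := herase.2 e (hM.1 heM)
        have hfe : f ≠ e := (Finset.mem_erase.mp hf).1
        rcases Finset.mem_union.mp (Finset.mem_of_mem_erase hf) with h | h
        · exact absurd hv1 (havoid f h v hv2 e heM)
        · exact hM.2 e heM f h hfe.symm v ⟨hv1, hv2⟩
  obtain ⟨d₁, m₁⟩ := key F₁ h₁
  obtain ⟨d₂, m₂⟩ := key F₂ h₂
  have := hG _ _ m₁ m₂
  rw [Finset.card_union_of_disjoint d₁, Finset.card_union_of_disjoint d₂] at this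
  omega
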